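/- Let e ∈ ℂ with |e| = 1 and M ≥ m > 0. If f : [a,b] → ℂ is Lebesgue integrable with Re[(M e − f(t))(conj(f(t)) − m · conj(e))] ≥ 0 for a.e. t ∈ [a,b], then (2√(mM)/(M+m)) · ∫ₐᵇ |f(t)| dt ≤ |∫ₐᵇ f(t) dt|. -/

import Mathlib

open MeasureTheory

theorem stmt_14 {a b : ℝ} {f : ℝ → ℂ} (hf : IntegrableOn f (Set.Icc a b))
    {e : ℂ} (he : ‖e‖ = 1) {m M : ℝ} (hm : 0 < m) (hmM : m ≤ M)
    (h : ∀ᵐ t ∂(volume.restrict (Set.Icc a b)),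
      0 ≤ ((M * e - f t) * (starRingEnd ℂ (f t) - m * starRingEnd ℂ e)).re) :
    (2 * Real.sqrt (m * M) / (M + m)) * ∫ t in Set.Icc a b, ‖f t‖ ≤
      ‖∫ t in Set.Icc a b, f t‖ := by
  have hMm : 0 < M + m := by linarith
  set s := Real.sqrt (m * M) with hs
  have hs2 : s ^ 2 = m * M := Real.sq_sqrt (by nlinarith)
  have hs0 : 0 ≤ s := Real.sqrt_nonneg _
  have he2 : e.re ^ 2 + e.im ^ 2 = 1 := by
    have h' := Complex.sq_norm e
    rw [he] at h'
    simpa [Complex.normSq_apply, sq] using h'.symm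
  have hpt : ∀ᵐ t ∂(volume.restrict (Set.Icc a b)),
      2 * s * ‖f t‖ ≤ (M + m) * ((starRingEnd ℂ e) * f t).re := by
    filter_upwards [h] with t ht
    have habs : ‖f t‖ ^ 2 = (f t).re ^ 2 + (f t).im ^ 2 := by
      rw [Complex.sq_norm, Complex.normSq_apply]; ring
    have h0 : (0:ℝ) ≤ ‖f t‖ := norm_nonneg _
    simp only [Complex.mul_re, Complex.mul_im, Complex.sub_re, Complex.sub_im,
      Complex.conj_re, Complex.conj_im, Complex.ofReal_re, Complex.ofReal_im] at ht ⊢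
    nlinarith [sq_nonneg (s - ‖f t‖), habs, he2, sq_nonneg (‖f t‖)]
  have hint1 : Integrable (fun t => 2 * s * ‖f t‖)
      (volume.restrict (Set.Icc a b)) := by
    have := hf.norm.const_mul (2 * s)
    simpa using this
  have hint2 : Integrable (fun t => (M + m) * ((starRingEnd ℂ e) * f t).re)
      (volume.restrict (Set.Icc a b)) :=
    ((hf.const_mul _).re).const_mul _
  have hmono := integral_mono_ae hint1 hint2 hpt
  rw [integral_const_mul] at hmono
  rw [integral_const_mul] at hmono
  have hre : (∫ t in Set.Icc a b, ((starRingEnd ℂ e) * f t).re) =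
      ((starRingEnd ℂ e) * ∫ t in Set.Icc a b, f t).re := by
    have h1 := integral_re (μ := volume.restrict (Set.Icc a b))
      (hf.const_mul (starRingEnd ℂ e))
    rw [integral_const_mul] at h1
    simpa using h1
  rw [hre] at hmono
  have hle : ((starRingEnd ℂ e) * ∫ t in Set.Icc a b, f t).re ≤
      ‖∫ t in Set.Icc a b, f t‖ := by
    calc ((starRingEnd ℂ e) * ∫ t in Set.Icc a b, f t).re
        ≤ ‖(starRingEnd ℂ e) * ∫ t in Set.Icc a b, f t‖ := Complex.re_le_norm _
      _ = ‖∫ t in Set.Icc a b, f t‖ := by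
          rw [norm_mul, Complex.norm_conj, he, one_mul]
  have hI : 0 ≤ ∫ t in Set.Icc a b, ‖f t‖ :=
    integral_nonneg fun t => norm_nonneg _
  rw [div_mul_eq_mul_div, div_le_iff₀ hMm]
  nlinarith [hmono, hle]
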